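/- Let φ : [0,∞) × ℝ^d → ℝ^d be C² such that for each fixed t the map x ↦ φ(t,x) is a bijection of ℝ^d whose inverse y ↦ φ^{-1}(t,y) is differentiable with det ∇_y(φ^{-1}(t,·))(y) ≥ c for some constant c > 0 and all (t,y). Then for every θ ∈ C_c((0,∞) × ℝ^d; C(T^d)), ∫_0^∞ ∫_{ℝ^d} θ(t, x, φ(t,x)/ε) dx dt → ∫_0^∞ ∫_{ℝ^d} ∫_{T^d} θ(t,x,v) dv dx dt as ε → 0⁺. (This expresses that δ_p(v − φ(t,x)/ε) ⇀ 1 in the sense of distributions.) -/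

import Mathlib

open MeasureTheory Filter Topology

/-- The unit cube `[0,1]^d` in `ℝ^d`, representing the torus `T^d`. -/
def cube (d : ℕ) : Set (Fin d → ℝ) := Set.Icc 0 1

/-- A function on `ℝ^d` is `ℤ^d`-periodic. -/
def ZPeriodic {d : ℕ} {E : Type*} (φ : (Fin d → ℝ) → E) : Prop :=
  ∀ (x : Fin d → ℝ) (k : Fin d → ℤ), φ (x + fun i => (k i : ℝ)) = φ x

namespace S17

open Pointwise

variable {d : ℕ}

/-- half-open unit box -/
def box0 (d : ℕ) : Set (Fin d → ℝ) := Set.pi Set.univ (fun _ => Set.Ico (0:ℝ) 1)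

def lat {d : ℕ} (k : Fin d → ℤ) : Fin d → ℝ := fun i => (k i : ℝ)

def Q {d : ℕ} (k : Fin d → ℤ) : Set (Fin d → ℝ) := lat k +ᵥ box0 d

lemma measurableSet_box0 : MeasurableSet (box0 d) :=
  MeasurableSet.univ_pi (fun _ => measurableSet_Ico)

lemma volume_box0 : volume (box0 d) = 1 := by
  rw [box0, volume_pi_pi]
  simp [Real.volume_Ico]

lemma mem_Q {k : Fin d → ℤ} {x : Fin d → ℝ} :
    x ∈ Q k ↔ ∀ i, (k i : ℝ) ≤ x i ∧ x i < k i + 1 := by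
  rw [Q, Set.mem_vadd_set_iff_neg_vadd_mem, box0, Set.mem_univ_pi]
  constructor
  · intro h i
    have := h i
    simp only [vadd_eq_add, Pi.add_apply, Pi.neg_apply, lat, Set.mem_Ico] at this
    constructor <;> linarith [this.1, this.2]
  · intro h i
    have := h i
    simp only [vadd_eq_add, Pi.add_apply, Pi.neg_apply, lat, Set.mem_Ico]
    constructor <;> linarith [this.1, this.2]

lemma measurableSet_Q (k : Fin d → ℤ) : MeasurableSet (Q k) :=
  measurableSet_box0.const_vadd (lat k)

lemma iUnion_Q : (⋃ k : Fin d → ℤ, Q k) = Set.univ := by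
  ext x
  simp only [Set.mem_iUnion, Set.mem_univ, iff_true]
  exact ⟨fun i => ⌊x i⌋, mem_Q.2 fun i => ⟨Int.floor_le _, Int.lt_floor_add_one _⟩⟩

lemma pairwise_disjoint_Q : Pairwise (Function.onFun Disjoint (Q (d := d))) := by
  intro k k' hne
  rw [Function.onFun, Set.disjoint_left]
  intro x hx hx'
  apply hne
  funext i
  have h1 := (mem_Q.1 hx) i
  have h2 := (mem_Q.1 hx') i
  have e1 : ⌊x i⌋ = k i := Int.floor_eq_iff.2 ⟨h1.1, by exact_mod_cast h1.2⟩
  have e2 : ⌊x i⌋ = k' i := Int.floor_eq_iff.2 ⟨h2.1, by exact_mod_cast h2.2⟩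
  rw [← e1, e2]

lemma setIntegral_vadd (a : Fin d → ℝ) (s : Set (Fin d → ℝ)) (f : (Fin d → ℝ) → ℝ) :
    ∫ x in a +ᵥ s, f x = ∫ u in s, f (a + u) := by
  have hmp : MeasurePreserving (fun x : Fin d → ℝ => a + x) volume volume :=
    measurePreserving_add_left volume a
  have hemb : MeasurableEmbedding (fun x : Fin d → ℝ => a + x) :=
    (MeasurableEquiv.addLeft a).measurableEmbedding
  have h := hmp.setIntegral_preimage_emb hemb f (a +ᵥ s)
  have hpre : (fun x : Fin d → ℝ => a + x) ⁻¹' (a +ᵥ s) = s := by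
    ext u
    simp only [Set.mem_preimage]
    exact Set.vadd_mem_vadd_set_iff
  rw [hpre] at h
  exact h.symm

lemma hasSum_partition (f : (Fin d → ℝ) → ℝ) (hf : Integrable f) :
    HasSum (fun k : Fin d → ℤ => ∫ u in box0 d, f (lat k + u)) (∫ x, f x) := by
  have h := hasSum_integral_iUnion (μ := volume) (s := fun k : Fin d → ℤ => Q k)
    (fun k => measurableSet_Q k) pairwise_disjoint_Q
    (by rw [iUnion_Q]; exact hf.integrableOn)
  have h1 : (fun k : Fin d → ℤ => ∫ x in Q k, f x)
      = fun k : Fin d → ℤ => ∫ u in box0 d, f (lat k + u) :=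
    funext fun k => setIntegral_vadd (lat k) (box0 d) f
  have h2 : ∫ x in ⋃ k : Fin d → ℤ, Q k, f x = ∫ x, f x := by
    rw [iUnion_Q, setIntegral_univ]
  rwa [h1, h2] at h


lemma box0_subset_cube : box0 d ⊆ cube d := by
  intro x hx
  rw [cube, ← Set.pi_univ_Icc]
  intro i _
  have := hx i (Set.mem_univ i)
  exact ⟨this.1, le_of_lt this.2⟩

lemma volume_cube : volume (cube d) = 1 := by
  rw [cube, ← Set.pi_univ_Icc, volume_pi_pi]
  simp [Real.volume_Icc]

lemma box0_ae_cube : box0 d =ᵐ[volume] cube d := by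
  apply ae_eq_of_subset_of_measure_ge box0_subset_cube
  · rw [volume_cube, volume_box0]
  · exact measurableSet_box0.nullMeasurableSet
  · rw [volume_cube]; exact ENNReal.one_ne_top

/-- distance between two points of box0 is at most 1 -/
lemma dist_box0_le {u v : Fin d → ℝ} (hu : u ∈ box0 d) (hv : v ∈ box0 d) :
    dist u v ≤ 1 := by
  rw [dist_pi_le_iff zero_le_one]
  intro i
  have h1 := hu i (Set.mem_univ i)
  have h2 := hv i (Set.mem_univ i)
  rw [Real.dist_eq, abs_sub_le_iff]
  constructor <;> [skip; skip] <;>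
    · simp only [Set.mem_Ico] at h1 h2; linarith [h1.1, h1.2, h2.1, h2.2]

lemma finite_Tset (S : Set (Fin d → ℝ)) (hS : IsCompact S) (ε : ℝ) (hε : 0 < ε) :
    {k : Fin d → ℤ | ∃ w ∈ box0 d, ε • (lat k + w) ∈ S}.Finite := by
  obtain ⟨R, hR⟩ := hS.isBounded.subset_closedBall 0
  set B : ℝ := R / ε + 1 with hB
  apply Set.Finite.subset (Set.finite_Icc (fun _ : Fin d => -⌈B⌉) (fun _ => ⌈B⌉))
  rintro k ⟨w, hw, hkw⟩
  have hnorm : ‖ε • (lat k + w)‖ ≤ R := by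
    have := hR hkw
    rwa [Metric.mem_closedBall, dist_zero_right] at this
  have hnorm2 : ‖lat k + w‖ ≤ R / ε := by
    rw [norm_smul, Real.norm_eq_abs, abs_of_pos hε] at hnorm
    rw [le_div_iff₀ hε, mul_comm]
    exact hnorm
  have hki : ∀ i, |(k i : ℝ)| ≤ B := by
    intro i
    have h1 : |(lat k + w) i| ≤ R / ε :=
      le_trans (norm_le_pi_norm (lat k + w) i) hnorm2
    have h2 : |w i| ≤ 1 := by
      have := hw i (Set.mem_univ i)
      rw [abs_le]
      exact ⟨by linarith [this.1], le_of_lt this.2⟩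
    have : (lat k + w) i = (k i : ℝ) + w i := rfl
    rw [this] at h1
    calc |(k i : ℝ)| = |((k i : ℝ) + w i) - w i| := by ring_nf
    _ ≤ |(k i : ℝ) + w i| + |w i| := abs_sub _ _
    _ ≤ R / ε + 1 := add_le_add h1 h2
  rw [Set.mem_Icc]
  constructor <;> rw [Pi.le_def] <;> intro i
  · have h := (abs_le.1 (hki i)).1
    have hB2 : B ≤ (⌈B⌉ : ℝ) := Int.le_ceil B
    have hr : ((-⌈B⌉ : ℤ) : ℝ) ≤ (k i : ℝ) := by push_cast; linarith
    exact_mod_cast hr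
  · have h := (abs_le.1 (hki i)).2
    have hB2 : B ≤ (⌈B⌉ : ℝ) := Int.le_ceil B
    have hr : ((k i : ℝ)) ≤ ((⌈B⌉ : ℤ) : ℝ) := by push_cast; linarith
    exact_mod_cast hr


/-- continuity of the partial integral over the cube -/
lemma continuous_cubeIntegral (f : (Fin d → ℝ) × (Fin d → ℝ) → ℝ) (hf : Continuous f) :
    Continuous fun y => ∫ v in cube d, f (y, v) := by
  rw [continuous_iff_continuousAt]
  intro y
  obtain ⟨C, hC⟩ := ((isCompact_closedBall y 1).prod (isCompact_Icc (a := (0 : Fin d → ℝ))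
    (b := 1))).exists_bound_of_continuousOn hf.continuousOn
  apply continuousAt_of_dominated (bound := fun _ => C)
  · exact Eventually.of_forall fun y' =>
      (hf.comp (continuous_const.prodMk continuous_id)).aestronglyMeasurable
  · filter_upwards [Metric.closedBall_mem_nhds y zero_lt_one] with y' hy'
    have hcm : MeasurableSet (cube d) := measurableSet_Icc
    exact (ae_restrict_iff' hcm).mpr (Eventually.of_forall fun v hv => hC (y', v) ⟨hy', hv⟩)
  · exact integrableOn_const (by rw [volume_cube]; exact ENNReal.one_ne_top)
  · exact Eventually.of_forall fun v =>
      (hf.comp (continuous_id.prodMk continuous_const)).continuousAt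

/-- counting lattice cells inside a set of finite measure -/
lemma counting (ε : ℝ) (hε : 0 < ε) (S2 : Set (Fin d → ℝ)) (hS2 : volume S2 ≠ ⊤)
    (T : Finset (Fin d → ℤ)) (hT : ∀ k ∈ T, (ε • Q k : Set (Fin d → ℝ)) ⊆ S2) :
    (T.card : ℝ) * ε ^ d ≤ (volume S2).toReal := by
  have hεne : ε ≠ 0 := ne_of_gt hε
  have hdisj : (↑T : Set (Fin d → ℤ)).PairwiseDisjoint (fun k => (ε • Q k : Set (Fin d → ℝ))) := by
    intro k _ k' _ hne
    have h := pairwise_disjoint_Q (d := d) hne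
    rw [Function.onFun, Set.disjoint_left] at h ⊢
    rintro x ⟨z, hz, rfl⟩ ⟨z', hz', hzz⟩
    have : z = z' := by
      have := congrArg (fun w => ε⁻¹ • w) hzz
      have h2 := (congrArg (fun w => ε⁻¹ • w) hzz)
      simpa [smul_smul, inv_mul_cancel₀ hεne] using h2.symm
    exact h hz (this ▸ hz')
  have hmeas : ∀ k : Fin d → ℤ, MeasurableSet (ε • Q k : Set (Fin d → ℝ)) := by
    intro k
    exact (measurableSet_Q k).const_smul₀ ε
  have hvol : ∀ k : Fin d → ℤ, volume (ε • Q k : Set (Fin d → ℝ)) = ENNReal.ofReal (ε ^ d) := by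
    intro k
    rw [Measure.addHaar_smul, Module.finrank_fin_fun, Q, measure_vadd, volume_box0, mul_one,
      abs_of_pos (pow_pos hε d)]
  have hbu : volume (⋃ k ∈ T, (ε • Q k : Set (Fin d → ℝ))) = T.card * ENNReal.ofReal (ε ^ d) := by
    rw [measure_biUnion_finset hdisj (fun k _ => hmeas k)]
    simp [hvol, Finset.sum_const, nsmul_eq_mul]
  have hle : (T.card : ENNReal) * ENNReal.ofReal (ε ^ d) ≤ volume S2 := by
    rw [← hbu]
    exact measure_mono (Set.iUnion₂_subset hT)
  have h2 := ENNReal.toReal_mono hS2 hle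
  rwa [ENNReal.toReal_mul, ENNReal.toReal_natCast,
    ENNReal.toReal_ofReal (le_of_lt (pow_pos hε d))] at h2


lemma unif_claim (f : (Fin d → ℝ) × (Fin d → ℝ) → ℝ) (hf : Continuous f)
    (S : Set (Fin d → ℝ)) (hS : IsCompact S)
    (hsupp : ∀ y v, y ∉ S → f (y, v) = 0)
    (hper : ∀ (y v : Fin d → ℝ) (k : Fin d → ℤ), f (y, v + lat k) = f (y, v))
    (δ : ℝ) (hδ : 0 < δ) :
    ∃ η : ℝ, 0 < η ∧ η ≤ 1 ∧
      ∀ y y' v, dist y y' < η → |f (y, v) - f (y', v)| ≤ δ := by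
  have hS1c : IsCompact (Metric.cthickening 1 S) := hS.cthickening
  have hP : IsCompact ((Metric.cthickening 1 S) ×ˢ cube d) := hS1c.prod isCompact_Icc
  have huc := hP.uniformContinuousOn_of_continuous hf.continuousOn
  rw [Metric.uniformContinuousOn_iff] at huc
  obtain ⟨η, hη, hη2⟩ := huc δ hδ
  refine ⟨min η 1, lt_min hη zero_lt_one, min_le_right _ _, ?_⟩
  intro y y' v hyy'
  have hyy'η : dist y y' < η := lt_of_lt_of_le hyy' (min_le_left _ _)
  have hyy'1 : dist y y' ≤ 1 := le_of_lt (lt_of_lt_of_le hyy' (min_le_right _ _))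
  by_cases hcase : y ∈ S ∨ y' ∈ S
  · have hy1 : y ∈ Metric.cthickening 1 S := by
      rcases hcase with h | h
      · exact Metric.self_subset_cthickening S h
      · exact Metric.mem_cthickening_of_dist_le y y' 1 S h hyy'1
    have hy'1 : y' ∈ Metric.cthickening 1 S := by
      rcases hcase with h | h
      · exact Metric.mem_cthickening_of_dist_le y' y 1 S h (dist_comm y y' ▸ hyy'1)
      · exact Metric.self_subset_cthickening S h
    set v0 : Fin d → ℝ := fun i => Int.fract (v i) with hv0
    have hv0mem : v0 ∈ cube d := by
      rw [cube, Set.mem_Icc]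
      constructor <;> rw [Pi.le_def] <;> intro i
      · exact Int.fract_nonneg _
      · exact le_of_lt (Int.fract_lt_one _)
    have hvsplit : ∀ y'' : Fin d → ℝ, f (y'', v) = f (y'', v0) := by
      intro y''
      have hsum : v0 + lat (fun i => ⌊v i⌋) = v := by
        funext i
        simp only [Pi.add_apply, hv0, lat, Int.fract]
        ring
      calc f (y'', v) = f (y'', v0 + lat (fun i => ⌊v i⌋)) := by rw [hsum]
      _ = f (y'', v0) := hper _ _ _
    rw [hvsplit y, hvsplit y']
    have hd : dist ((y, v0) : (Fin d → ℝ) × (Fin d → ℝ)) (y', v0) < η := by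
      rw [Prod.dist_eq]
      simp only [dist_self]
      rw [max_eq_left dist_nonneg]
      exact hyy'η
    have := hη2 (y, v0) ⟨hy1, hv0mem⟩ (y', v0) ⟨hy'1, hv0mem⟩ hd
    rw [Real.dist_eq] at this
    exact le_of_lt this
  · push_neg at hcase
    rw [hsupp y v hcase.1, hsupp y' v hcase.2, sub_zero, abs_zero]
    exact le_of_lt hδ


lemma oscillation_est (f : (Fin d → ℝ) × (Fin d → ℝ) → ℝ) (hf : Continuous f)
    (S : Set (Fin d → ℝ)) (hS : IsCompact S)
    (hsupp : ∀ y v, y ∉ S → f (y, v) = 0)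
    (hper : ∀ (y v : Fin d → ℝ) (k : Fin d → ℤ), f (y, v + lat k) = f (y, v))
    (δ : ℝ) (hδ : 0 < δ) (η : ℝ) (hη1 : η ≤ 1)
    (hucl : ∀ y y' v, dist y y' < η → |f (y, v) - f (y', v)| ≤ δ)
    (ε : ℝ) (hε : 0 < ε) (hεη : ε < η) :
    |(∫ y, f (y, ε⁻¹ • y)) - ∫ y, ∫ v in cube d, f (y, v)|
      ≤ δ * (volume (Metric.cthickening 1 S)).toReal := by
  have hεne : ε ≠ 0 := ne_of_gt hε
  have hε1 : ε ≤ 1 := le_trans (le_of_lt hεη) hη1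
  have hεd : (0:ℝ) < ε ^ d := pow_pos hε d
  set G : (Fin d → ℝ) → ℝ := fun y => ∫ v in cube d, f (y, v) with hGdef
  have hGcont : Continuous G := continuous_cubeIntegral f hf
  have hGsupp : ∀ y, y ∉ S → G y = 0 := by
    intro y hy
    rw [hGdef]
    simp only
    rw [integral_congr_ae (Eventually.of_forall fun v => hsupp y v hy), integral_zero]
  -- compactness of supports
  have hcomp : IsCompact ((fun x => ε⁻¹ • x) '' S) := hS.image (continuous_const_smul ε⁻¹)
  have hmem_im : ∀ z : Fin d → ℝ, ε • z ∈ S → z ∈ (fun x => ε⁻¹ • x) '' S := by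
    intro z hz
    exact ⟨ε • z, hz, by show ε⁻¹ • ε • z = z; rw [smul_smul, inv_mul_cancel₀ hεne, one_smul]⟩
  -- integrability
  have hfε : Integrable (fun z => f (ε • z, z)) := by
    apply Continuous.integrable_of_hasCompactSupport
      (hf.comp ((continuous_const_smul ε).prodMk continuous_id))
    apply HasCompactSupport.intro hcomp
    intro z hz
    exact hsupp _ _ (fun hmem => hz (hmem_im z hmem))
  have hGε : Integrable (fun z => G (ε • z)) := by
    apply Continuous.integrable_of_hasCompactSupport
      (hGcont.comp (continuous_const_smul ε))
    apply HasCompactSupport.intro hcomp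
    intro z hz
    exact hGsupp _ (fun hmem => hz (hmem_im z hmem))
  -- scaling
  have hscale1 : ∫ y, f (y, ε⁻¹ • y) = ε ^ d * ∫ z, f (ε • z, z) := by
    have h := Measure.integral_comp_smul volume (fun y => f (y, ε⁻¹ • y)) ε
    simp only [Module.finrank_fin_fun, smul_eq_mul] at h
    have he : (fun z : Fin d → ℝ => f (ε • z, ε⁻¹ • (ε • z))) = fun z => f (ε • z, z) := by
      funext z; rw [smul_smul, inv_mul_cancel₀ hεne, one_smul]
    rw [show (fun z : Fin d → ℝ => f (ε • z, ε⁻¹ • (ε • z))) = fun z => f (ε • z, z) from he] at h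
    rw [h, abs_of_pos (inv_pos.2 hεd), ← mul_assoc, mul_inv_cancel₀ (ne_of_gt hεd), one_mul]
  have hscale2 : ∫ y, G y = ε ^ d * ∫ z, G (ε • z) := by
    have h := Measure.integral_comp_smul volume G ε
    simp only [Module.finrank_fin_fun, smul_eq_mul] at h
    rw [h, abs_of_pos (inv_pos.2 hεd), ← mul_assoc, mul_inv_cancel₀ (ne_of_gt hεd), one_mul]
  -- partition sums
  have hper2 : ∀ (y u : Fin d → ℝ) (k : Fin d → ℤ), f (y, lat k + u) = f (y, u) := by
    intro y u k
    rw [add_comm]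
    exact hper y u k
  have h1 : HasSum (fun k : Fin d → ℤ => ∫ u in box0 d, f (ε • (lat k + u), u))
      (∫ z, f (ε • z, z)) := by
    have heq : (fun k : Fin d → ℤ => ∫ u in box0 d, f (ε • (lat k + u), u))
        = fun k : Fin d → ℤ => ∫ u in box0 d, (fun z => f (ε • z, z)) (lat k + u) := by
      funext k
      exact integral_congr_ae (Eventually.of_forall fun u => (hper2 _ u k).symm)
    rw [heq]
    exact hasSum_partition _ hfε
  have h2 : HasSum (fun k : Fin d → ℤ => ∫ u in box0 d, G (ε • (lat k + u)))
      (∫ z, G (ε • z)) := hasSum_partition (fun z => G (ε • z)) hGε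
  have hcsum : HasSum (fun k : Fin d → ℤ =>
      (∫ u in box0 d, f (ε • (lat k + u), u)) - ∫ u in box0 d, G (ε • (lat k + u)))
      ((∫ z, f (ε • z, z)) - ∫ z, G (ε • z)) := h1.sub h2
  set c : (Fin d → ℤ) → ℝ := fun k =>
    (∫ u in box0 d, f (ε • (lat k + u), u)) - ∫ u in box0 d, G (ε • (lat k + u)) with hcdef
  have hTfin : {k : Fin d → ℤ | ∃ w ∈ box0 d, ε • (lat k + w) ∈ S}.Finite :=
    finite_Tset S hS ε hε
  have hczero : ∀ k, k ∉ {k : Fin d → ℤ | ∃ w ∈ box0 d, ε • (lat k + w) ∈ S} → c k = 0 := by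
    intro k hk
    have hySnot : ∀ u ∈ box0 d, ε • (lat k + u) ∉ S := fun u hu hmem => hk ⟨u, hu, hmem⟩
    have e1 : ∫ u in box0 d, f (ε • (lat k + u), u) = 0 := by
      rw [setIntegral_congr_fun measurableSet_box0
        (fun u hu => hsupp _ u (hySnot u hu) : Set.EqOn _ (fun _ => (0:ℝ)) (box0 d))]
      exact integral_zero _ _
    have e2 : ∫ u in box0 d, G (ε • (lat k + u)) = 0 := by
      rw [setIntegral_congr_fun measurableSet_box0
        (fun u hu => hGsupp _ (hySnot u hu) : Set.EqOn _ (fun _ => (0:ℝ)) (box0 d))]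
      exact integral_zero _ _
    rw [hcdef]
    simp only [e1, e2, sub_zero]
  have hGbox : ∀ y : Fin d → ℝ, G y = ∫ v in box0 d, f (y, v) := fun y =>
    (setIntegral_congr_set box0_ae_cube).symm
  have hcbound : ∀ k, |c k| ≤ δ := by
    intro k
    have hIB : ∀ y0 : Fin d → ℝ, IntegrableOn (fun v => f (y0, v)) (box0 d) := fun y0 =>
      (((hf.comp (continuous_const.prodMk continuous_id)).continuousOn.integrableOn_compact
        (isCompact_Icc : IsCompact (cube d))).mono_set box0_subset_cube)
    have hcont_aff : Continuous fun v : Fin d → ℝ => ε • (lat k + v) :=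
      (continuous_const.add continuous_id).const_smul ε
    have hIfv : IntegrableOn (fun v => f (ε • (lat k + v), v)) (box0 d) :=
      ((hf.comp (hcont_aff.prodMk continuous_id)).continuousOn.integrableOn_compact
        (isCompact_Icc : IsCompact (cube d))).mono_set box0_subset_cube
    have hIG : IntegrableOn (fun u => G (ε • (lat k + u))) (box0 d) :=
      ((hGcont.comp hcont_aff).continuousOn.integrableOn_compact
        (isCompact_Icc : IsCompact (cube d))).mono_set box0_subset_cube
    have hfix : (fun u => ∫ v in box0 d, f (ε • (lat k + u), v))
        = fun u => G (ε • (lat k + u)) := by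
      funext u; rw [hGbox]
    have hck : c k = ∫ u in box0 d,
        ((∫ v in box0 d, f (ε • (lat k + v), v)) - ∫ v in box0 d, f (ε • (lat k + u), v)) := by
      have hint2 : IntegrableOn (fun u => ∫ v in box0 d, f (ε • (lat k + u), v)) (box0 d) := by
        rw [hfix]; exact hIG
      rw [integral_sub
        (integrableOn_const (μ := volume) (s := box0 d)
          (C := ∫ v in box0 d, f (ε • (lat k + v), v))
          (by rw [volume_box0]; exact ENNReal.one_ne_top)) hint2]
      rw [setIntegral_const, measureReal_def, volume_box0, ENNReal.toReal_one, one_smul]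
      rw [hcdef]
      congr 1
      rw [hfix]
    rw [hck, ← Real.norm_eq_abs]
    have hb := norm_setIntegral_le_of_norm_le_const (μ := volume) (s := box0 d) (C := δ)
      (f := fun u => (∫ v in box0 d, f (ε • (lat k + v), v)) - ∫ v in box0 d, f (ε • (lat k + u), v))
      (by rw [volume_box0]; exact ENNReal.one_lt_top)
      (by
        intro u hu
        show ‖(∫ v in box0 d, f (ε • (lat k + v), v)) - ∫ v in box0 d, f (ε • (lat k + u), v)‖ ≤ δ
        have hdiff : (∫ v in box0 d, f (ε • (lat k + v), v)) - ∫ v in box0 d, f (ε • (lat k + u), v)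
            = ∫ v in box0 d, (f (ε • (lat k + v), v) - f (ε • (lat k + u), v)) :=
          (integral_sub hIfv (hIB _)).symm
        rw [hdiff]
        have hb2 := norm_setIntegral_le_of_norm_le_const (μ := volume) (s := box0 d) (C := δ)
          (f := fun v => f (ε • (lat k + v), v) - f (ε • (lat k + u), v))
          (by rw [volume_box0]; exact ENNReal.one_lt_top)
          (by
            intro v hv
            rw [Real.norm_eq_abs]
            apply hucl
            rw [dist_smul₀, dist_add_left, Real.norm_eq_abs, abs_of_pos hε]
            have := dist_box0_le hv hu
            nlinarith [dist_nonneg (x := v) (y := u)])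
        rw [measureReal_def, volume_box0, ENNReal.toReal_one, mul_one] at hb2
        exact hb2)
    rw [measureReal_def, volume_box0, ENNReal.toReal_one, mul_one] at hb
    exact hb
  -- summability and counting
  have hsummc : Summable fun k => |c k| := summable_abs_iff.2 hcsum.summable
  have hoff : ∀ k ∉ hTfin.toFinset, |c k| = 0 := by
    intro k hk
    rw [hczero k (by simpa using hk), abs_zero]
  have htsum : ∑' k, |c k| ≤ (hTfin.toFinset.card : ℝ) * δ := by
    rw [tsum_eq_sum hoff]
    calc ∑ k ∈ hTfin.toFinset, |c k| ≤ ∑ _k ∈ hTfin.toFinset, δ :=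
          Finset.sum_le_sum (fun k _ => hcbound k)
    _ = hTfin.toFinset.card * δ := by rw [Finset.sum_const, nsmul_eq_mul]
  have hcount : (hTfin.toFinset.card : ℝ) * ε ^ d
      ≤ (volume (Metric.cthickening 1 S)).toReal := by
    apply counting ε hε _ hS.cthickening.measure_lt_top.ne
    intro k hk
    rintro x ⟨z, hz, rfl⟩
    obtain ⟨w, hw, hws⟩ := (Set.Finite.mem_toFinset hTfin).1 hk
    obtain ⟨z0, hz0, rfl⟩ : ∃ z0 ∈ box0 d, z = lat k + z0 := by
      rw [Q] at hz
      obtain ⟨z0, hz0, hzz⟩ := hz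
      exact ⟨z0, hz0, hzz.symm⟩
    apply Metric.mem_cthickening_of_dist_le _ _ _ _ hws
    rw [dist_smul₀, dist_add_left, Real.norm_eq_abs, abs_of_pos hε]
    have h1 := dist_box0_le hz0 hw
    nlinarith [dist_nonneg (x := z0) (y := w)]
  -- final chain
  have hfinal : |(∫ y, f (y, ε⁻¹ • y)) - ∫ y, G y| = ε ^ d * |∑' k, c k| := by
    rw [hscale1, hscale2, ← mul_sub, abs_mul, abs_of_pos hεd, ← hcsum.tsum_eq]
  calc |(∫ y, f (y, ε⁻¹ • y)) - ∫ y, ∫ v in cube d, f (y, v)|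
      = ε ^ d * |∑' k, c k| := hfinal
  _ ≤ ε ^ d * ∑' k, |c k| := by
      apply mul_le_mul_of_nonneg_left _ (le_of_lt hεd)
      calc |∑' k, c k| = ‖∑' k, c k‖ := (Real.norm_eq_abs _).symm
      _ ≤ ∑' k, ‖c k‖ := norm_tsum_le_tsum_norm (by simpa [Real.norm_eq_abs] using hsummc)
      _ = ∑' k, |c k| := by simp [Real.norm_eq_abs]
  _ ≤ ε ^ d * ((hTfin.toFinset.card : ℝ) * δ) :=
      mul_le_mul_of_nonneg_left htsum (le_of_lt hεd)
  _ = δ * ((hTfin.toFinset.card : ℝ) * ε ^ d) := by ring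
  _ ≤ δ * (volume (Metric.cthickening 1 S)).toReal :=
      mul_le_mul_of_nonneg_left hcount (le_of_lt hδ)


lemma oscillation (f : (Fin d → ℝ) × (Fin d → ℝ) → ℝ) (hf : Continuous f)
    (S : Set (Fin d → ℝ)) (hS : IsCompact S)
    (hsupp : ∀ y v, y ∉ S → f (y, v) = 0)
    (hper : ∀ (y v : Fin d → ℝ) (k : Fin d → ℤ), f (y, v + lat k) = f (y, v)) :
    Tendsto (fun ε : ℝ => ∫ y, f (y, ε⁻¹ • y)) (𝓝[>] (0:ℝ))
      (𝓝 (∫ y, ∫ v in cube d, f (y, v))) := by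
  rw [Metric.tendsto_nhds]
  intro δ0 hδ0
  set C0 := (volume (Metric.cthickening 1 S)).toReal with hC0def
  have hC0 : 0 ≤ C0 := ENNReal.toReal_nonneg
  have hδ : 0 < δ0 / (2 * (C0 + 1)) := by positivity
  obtain ⟨η, hη, hη1, hucl⟩ := unif_claim f hf S hS hsupp hper _ hδ
  filter_upwards [Ioo_mem_nhdsGT_of_mem (Set.left_mem_Ico.2 hη)] with ε hε
  rw [Real.dist_eq]
  have hest := oscillation_est f hf S hS hsupp hper _ hδ η hη1 hucl ε hε.1 hε.2
  have hkey : δ0 / (2 * (C0 + 1)) * (C0 + 1) = δ0 / 2 := by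
    field_simp
  calc |(∫ y, f (y, ε⁻¹ • y)) - ∫ y, ∫ v in cube d, f (y, v)|
      ≤ δ0 / (2 * (C0 + 1)) * C0 := hest
  _ ≤ δ0 / (2 * (C0 + 1)) * (C0 + 1) := by nlinarith
  _ = δ0 / 2 := hkey
  _ < δ0 := by linarith


lemma clm_det_comp (A B : (Fin d → ℝ) →L[ℝ] (Fin d → ℝ)) :
    (A.comp B).det = A.det * B.det := by
  simp only [ContinuousLinearMap.det, ContinuousLinearMap.coe_comp, LinearMap.det_comp]
  exact LinearMap.det_comp (A : (Fin d → ℝ) →ₗ[ℝ] (Fin d → ℝ)) B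

lemma inner_tendsto (c : ℝ) (hc : 0 < c)
    (φ : ℝ → (Fin d → ℝ) → Fin d → ℝ)
    (hφ : ContDiff ℝ 2 (fun p : ℝ × (Fin d → ℝ) => φ p.1 p.2))
    (ψ : ℝ → (Fin d → ℝ) → Fin d → ℝ)
    (hψleft : ∀ t, Function.LeftInverse (ψ t) (φ t))
    (hψright : ∀ t, Function.RightInverse (ψ t) (φ t))
    (hψdiff : ∀ t y, DifferentiableAt ℝ (ψ t) y)
    (hdet : ∀ t y, c ≤ (fderiv ℝ (ψ t) y).det)
    (θ : ℝ × (Fin d → ℝ) × (Fin d → ℝ) → ℝ) (hθc : Continuous θ)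
    (hθper : ∀ (t : ℝ) (x v : Fin d → ℝ) (k : Fin d → ℤ),
      θ (t, x, v + fun i => (k i : ℝ)) = θ (t, x, v))
    (K : Set (ℝ × (Fin d → ℝ))) (hK : IsCompact K)
    (hθsupp : ∀ (t : ℝ) (x v : Fin d → ℝ), (t, x) ∉ K → θ (t, x, v) = 0)
    (t : ℝ) :
    Tendsto (fun ε : ℝ => ∫ x, θ (t, x, ε⁻¹ • φ t x)) (𝓝[>] (0:ℝ))
      (𝓝 (∫ x, ∫ v in cube d, θ (t, x, v))) := by
  have hφt : ContDiff ℝ 2 (φ t) := hφ.comp (contDiff_const.prodMk contDiff_id)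
  have hφtc : Continuous (φ t) := hφt.continuous
  have hψtc : Continuous (ψ t) := by
    rw [continuous_iff_continuousAt]
    exact fun y => (hψdiff t y).continuousAt
  have hdetprod : ∀ y, (fderiv ℝ (φ t) (ψ t y)).det * (fderiv ℝ (ψ t) y).det = 1 := by
    intro y
    have hψ' : HasFDerivAt (ψ t) (fderiv ℝ (ψ t) y) y := (hψdiff t y).hasFDerivAt
    have hφ' : HasFDerivAt (φ t) (fderiv ℝ (φ t) (ψ t y)) (ψ t y) :=
      ((hφt.differentiable two_ne_zero) (ψ t y)).hasFDerivAt
    have hcomp := hφ'.comp y hψ'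
    have hid : (φ t ∘ ψ t) = id := funext fun z => hψright t z
    rw [hid] at hcomp
    have huniq := hcomp.unique (hasFDerivAt_id y)
    have hdet2 := congrArg ContinuousLinearMap.det huniq
    rwa [clm_det_comp, show (ContinuousLinearMap.id ℝ (Fin d → ℝ)).det = 1 by
      simp [ContinuousLinearMap.det]] at hdet2
  have hdetne : ∀ y, (fderiv ℝ (φ t) (ψ t y)).det ≠ 0 :=
    fun y => left_ne_zero_of_mul_eq_one (hdetprod y)
  have hJeq : ∀ y, (fderiv ℝ (ψ t) y).det = ((fderiv ℝ (φ t) (ψ t y)).det)⁻¹ :=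
    fun y => (inv_eq_of_mul_eq_one_right (hdetprod y)).symm
  have hJcont : Continuous fun y => (fderiv ℝ (ψ t) y).det := by
    rw [show (fun y => (fderiv ℝ (ψ t) y).det)
        = fun y => ((fderiv ℝ (φ t) (ψ t y)).det)⁻¹ from funext hJeq]
    exact (ContinuousLinearMap.continuous_det.comp
      ((hφt.continuous_fderiv two_ne_zero).comp hψtc)).inv₀ hdetne
  have hcov : ∀ g : (Fin d → ℝ) → ℝ,
      ∫ x, g x = ∫ y, |(fderiv ℝ (ψ t) y).det| * g (ψ t y) := by
    intro g
    have h := integral_image_eq_integral_abs_det_fderiv_smul volume MeasurableSet.univ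
      (fun y (_ : y ∈ Set.univ) => (hψdiff t y).hasFDerivAt.hasFDerivWithinAt)
      ((Function.LeftInverse.injective (hψright t)).injOn) g
    have him : ψ t '' Set.univ = Set.univ := by
      rw [Set.image_univ]
      exact (Function.LeftInverse.surjective (hψleft t)).range_eq
    rw [him, setIntegral_univ, setIntegral_univ] at h
    simpa [smul_eq_mul] using h
  -- the oscillation data
  set S : Set (Fin d → ℝ) := φ t '' (Prod.snd '' K) with hSdef
  have hScomp : IsCompact S := (hK.image continuous_snd).image hφtc
  have hosc := oscillation
    (fun p : (Fin d → ℝ) × (Fin d → ℝ) => |(fderiv ℝ (ψ t) p.1).det| * θ (t, ψ t p.1, p.2))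
    (((continuous_abs.comp hJcont).comp continuous_fst).mul
      (hθc.comp (continuous_const.prodMk ((hψtc.comp continuous_fst).prodMk continuous_snd))))
    S hScomp
    (by
      intro y v hy
      have hnotK : (t, ψ t y) ∉ K := by
        intro hmem
        exact hy ⟨ψ t y, ⟨(t, ψ t y), hmem, rfl⟩, hψright t y⟩
      show |(fderiv ℝ (ψ t) y).det| * θ (t, ψ t y, v) = 0
      rw [hθsupp t (ψ t y) v hnotK, mul_zero])
    (by
      intro y v k
      show |(fderiv ℝ (ψ t) y).det| * θ (t, ψ t y, v + lat k)
        = |(fderiv ℝ (ψ t) y).det| * θ (t, ψ t y, v)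
      rw [show lat k = fun i => ((k i : ℤ) : ℝ) from rfl, hθper t (ψ t y) v k])
  have hlhs : ∀ ε : ℝ,
      (∫ y, |(fderiv ℝ (ψ t) y).det| * θ (t, ψ t y, ε⁻¹ • y))
        = ∫ x, θ (t, x, ε⁻¹ • φ t x) := by
    intro ε
    rw [hcov (fun x => θ (t, x, ε⁻¹ • φ t x))]
    apply integral_congr_ae
    apply Eventually.of_forall
    intro y
    simp only
    rw [hψright t y]
  have hrhs : (∫ y, ∫ v in cube d, |(fderiv ℝ (ψ t) y).det| * θ (t, ψ t y, v))
      = ∫ x, ∫ v in cube d, θ (t, x, v) := by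
    rw [hcov (fun x => ∫ v in cube d, θ (t, x, v))]
    apply integral_congr_ae
    apply Eventually.of_forall
    intro y
    simp only
    rw [integral_const_mul]
  rw [hrhs] at hosc
  exact hosc.congr hlhs

end S17

open S17 in
/-- if `φ(t,·)` is a `C²` family of bijections of `ℝ^d` whose
inverses `ψ(t,·)` are differentiable with `det ∇_y ψ(t,y) ≥ c > 0`, then
`δ_p(v − φ(t,x)/ε) ⇀ 1`: for every continuous `θ(t,x,v)`, `ℤ^d`-periodic in `v`
and compactly supported in `(t,x) ∈ (0,∞) × ℝ^d`,
`∫_0^∞ ∫ θ(t,x,φ(t,x)/ε) dx dt → ∫_0^∞ ∫ ∫_{T^d} θ(t,x,v) dv dx dt` as `ε → 0⁺`. -/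
theorem statement17 (d : ℕ) (c : ℝ) (hc : 0 < c)
    (φ : ℝ → (Fin d → ℝ) → Fin d → ℝ)
    (hφ : ContDiff ℝ 2 (fun p : ℝ × (Fin d → ℝ) => φ p.1 p.2))
    (hφbij : ∀ t, Function.Bijective (φ t))
    (ψ : ℝ → (Fin d → ℝ) → Fin d → ℝ)
    (hψleft : ∀ t, Function.LeftInverse (ψ t) (φ t))
    (hψright : ∀ t, Function.RightInverse (ψ t) (φ t))
    (hψdiff : ∀ t y, DifferentiableAt ℝ (ψ t) y)
    (hdet : ∀ t y, c ≤ (fderiv ℝ (ψ t) y).det)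
    (θ : ℝ × (Fin d → ℝ) × (Fin d → ℝ) → ℝ) (hθc : Continuous θ)
    (hθper : ∀ (t : ℝ) (x v : Fin d → ℝ) (k : Fin d → ℤ),
      θ (t, x, v + fun i => (k i : ℝ)) = θ (t, x, v))
    (K : Set (ℝ × (Fin d → ℝ))) (hK : IsCompact K)
    (hKpos : K ⊆ Set.Ioi 0 ×ˢ Set.univ)
    (hθsupp : ∀ (t : ℝ) (x v : Fin d → ℝ), (t, x) ∉ K → θ (t, x, v) = 0) :
    Tendsto
      (fun ε : ℝ => ∫ t in Set.Ioi (0:ℝ), ∫ x, θ (t, x, ε⁻¹ • φ t x))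
      (𝓝[>] (0:ℝ))
      (𝓝 (∫ t in Set.Ioi (0:ℝ), ∫ x, ∫ v in cube d, θ (t, x, v))) := by
  -- global bound on θ
  obtain ⟨M0, hM0⟩ := (hK.prod (isCompact_Icc : IsCompact (cube d))).exists_bound_of_continuousOn
    ((hθc.comp (by fun_prop :
      Continuous fun q : (ℝ × (Fin d → ℝ)) × (Fin d → ℝ) => (q.1.1, q.1.2, q.2))).continuousOn)
  set M := max M0 0 with hMdef
  have hMnn : (0:ℝ) ≤ M := le_max_right _ _
  have hθbdd : ∀ p : ℝ × (Fin d → ℝ) × (Fin d → ℝ), |θ p| ≤ M := by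
    rintro ⟨t, x, v⟩
    by_cases hmem : (t, x) ∈ K
    · set v0 : Fin d → ℝ := fun i => Int.fract (v i) with hv0
      have hv0mem : v0 ∈ cube d := by
        rw [cube, Set.mem_Icc]
        constructor <;> rw [Pi.le_def] <;> intro i
        · exact Int.fract_nonneg _
        · exact le_of_lt (Int.fract_lt_one _)
      have hsplit : θ (t, x, v) = θ (t, x, v0) := by
        have hsum : v0 + (fun i => ((⌊v i⌋ : ℤ) : ℝ)) = v := by
          funext i
          simp only [Pi.add_apply, hv0, Int.fract]
          ring
        calc θ (t, x, v) = θ (t, x, v0 + fun i => ((⌊v i⌋ : ℤ) : ℝ)) := by rw [hsum]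
        _ = θ (t, x, v0) := hθper t x v0 _
      rw [hsplit, ← Real.norm_eq_abs]
      exact le_trans (hM0 ((t, x), v0) ⟨hmem, hv0mem⟩) (le_max_left _ _)
    · rw [hθsupp t x v hmem]
      simpa using hMnn
  have hKxm : MeasurableSet (Prod.snd '' K) := (hK.image continuous_snd).isClosed.measurableSet
  have hKtm : MeasurableSet (Prod.fst '' K) := (hK.image continuous_fst).isClosed.measurableSet
  -- continuity in t of the inner integral
  have hFcont : ∀ ε : ℝ, Continuous fun t => ∫ x, θ (t, x, ε⁻¹ • φ t x) := by
    intro ε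
    apply continuous_of_dominated (bound := Set.indicator (Prod.snd '' K) fun _ => M)
    · intro t
      exact (hθc.comp (continuous_const.prodMk (continuous_id.prodMk
        ((hφ.continuous.comp (continuous_const.prodMk continuous_id)).const_smul
          ε⁻¹)))).aestronglyMeasurable
    · intro t
      apply Eventually.of_forall
      intro x
      by_cases hx : x ∈ Prod.snd '' K
      · rw [Set.indicator_of_mem hx, Real.norm_eq_abs]
        exact hθbdd _
      · rw [Set.indicator_of_notMem hx,
          hθsupp t x _ (fun hmem => hx ⟨(t, x), hmem, rfl⟩)]
        simp
    · rw [integrable_indicator_iff hKxm]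
      exact integrableOn_const (hK.image continuous_snd).measure_lt_top.ne
    · apply Eventually.of_forall
      intro x
      exact hθc.comp (continuous_id.prodMk (continuous_const.prodMk
        ((hφ.continuous.comp (continuous_id.prodMk continuous_const)).const_smul ε⁻¹)))
  -- uniform bound
  have hFbound : ∀ ε : ℝ, ∀ t : ℝ, ‖∫ x, θ (t, x, ε⁻¹ • φ t x)‖
      ≤ Set.indicator (Prod.fst '' K) (fun _ => M * (volume (Prod.snd '' K)).toReal) t := by
    intro ε t
    by_cases ht : t ∈ Prod.fst '' K
    · rw [Set.indicator_of_mem ht]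
      have hsupp2 : ∀ x ∉ Prod.snd '' K, θ (t, x, ε⁻¹ • φ t x) = 0 :=
        fun x hx => hθsupp t x _ (fun hmem => hx ⟨(t, x), hmem, rfl⟩)
      rw [← setIntegral_eq_integral_of_forall_compl_eq_zero hsupp2]
      apply norm_setIntegral_le_of_norm_le_const (hK.image continuous_snd).measure_lt_top
      · intro x _
        rw [Real.norm_eq_abs]
        exact hθbdd _
    · rw [Set.indicator_of_notMem ht]
      have hz : ∀ x : Fin d → ℝ, θ (t, x, ε⁻¹ • φ t x) = 0 :=
        fun x => hθsupp t x _ (fun hmem => ht ⟨(t, x), hmem, rfl⟩)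
      simp [hz]
  apply tendsto_integral_filter_of_dominated_convergence
    (Set.indicator (Prod.fst '' K) (fun _ => M * (volume (Prod.snd '' K)).toReal))
  · exact Eventually.of_forall fun ε => (hFcont ε).aestronglyMeasurable.restrict
  · exact Eventually.of_forall fun ε => Eventually.of_forall fun t => hFbound ε t
  · apply Integrable.restrict
    rw [integrable_indicator_iff hKtm]
    exact integrableOn_const (hK.image continuous_fst).measure_lt_top.ne
  · exact Eventually.of_forall fun t =>
      inner_tendsto c hc φ hφ ψ hψleft hψright hψdiff hdet θ hθc hθper K hK hθsupp t
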